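/- Let H be a reproducing kernel Hilbert space on a set X, and let A, B be disjoint finite subsets of X of the same cardinality n such that the kernel functions {k_w : w ∈ A ∪ B} are linearly independent. Then the n×n matrix (k_{b_i}(a_j)) is invertible if and only if Z_A ∩ Z_B^⊥ = {0} and Z_A^⊥ ∩ Z_B = {0}, where Z_S = {f ∈ H : f vanishes on S}. -/

import Mathlib

private lemma mem_orthogonal_span_range_iff {H : Type*} [NormedAddCommGroup H]
    [InnerProductSpace ℂ H] {n : ℕ} (v : Fin n → H) (x : H) :
    x ∈ (Submodule.span ℂ (Set.range v))ᗮ ↔ ∀ i, inner ℂ (v i) x = (0 : ℂ) := by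
  rw [Submodule.mem_orthogonal]
  constructor
  · intro h i; exact h _ (Submodule.subset_span ⟨i, rfl⟩)
  · intro h u hu
    induction hu using Submodule.span_induction with
    | mem u hu => obtain ⟨i, rfl⟩ := hu; exact h i
    | zero => simp
    | add u w _ _ hu hw => simp [inner_add_left, hu, hw]
    | smul c u _ hu => simp [inner_smul_left, hu]

/-- In a reproducing kernel Hilbert space on `X`, for disjoint families
`a b : Fin n → X` whose `2n` kernel functions are linearly independent, the matrix
`K i j = kk (b i) (a j)` is invertible iff `Z_A ⊓ Z_Bᗮ = ⊥` and `Z_Aᗮ ⊓ Z_B = ⊥`. -/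
theorem rkhs_kernel_matrix_invertible_iff
    {H : Type*} [NormedAddCommGroup H] [InnerProductSpace ℂ H]
    {X : Type*} (ev : H →ₗ[ℂ] (X → ℂ)) (kk : X → H)
    (hrep : ∀ (f : H) (w : X), ev f w = inner ℂ (kk w) f)
    {n : ℕ} (a b : Fin n → X)
    (hainj : Function.Injective a) (hbinj : Function.Injective b)
    (hdisj : ∀ i j, a i ≠ b j)
    (hli : LinearIndependent ℂ fun x : Fin n ⊕ Fin n => kk (Sum.elim a b x)) :
    (Matrix.of fun i j : Fin n => ev (kk (b i)) (a j)).det ≠ 0 ↔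
      ((⨅ j : Fin n, LinearMap.ker ((LinearMap.proj (a j)).comp ev)) ⊓
          (⨅ i : Fin n, LinearMap.ker ((LinearMap.proj (b i)).comp ev))ᗮ = ⊥ ∧
        (⨅ j : Fin n, LinearMap.ker ((LinearMap.proj (a j)).comp ev))ᗮ ⊓
          (⨅ i : Fin n, LinearMap.ker ((LinearMap.proj (b i)).comp ev)) = ⊥) := by
  classical
  set K : Matrix (Fin n) (Fin n) ℂ := Matrix.of fun i j : Fin n => ev (kk (b i)) (a j) with hKdef
  set U : Submodule ℂ H := Submodule.span ℂ (Set.range fun j => kk (a j)) with hU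
  set V : Submodule ℂ H := Submodule.span ℂ (Set.range fun i => kk (b i)) with hV
  have hlia : LinearIndependent ℂ fun j => kk (a j) := hli.comp Sum.inl Sum.inl_injective
  have hlib : LinearIndependent ℂ fun i => kk (b i) := hli.comp Sum.inr Sum.inr_injective
  have hKe : ∀ i j, K i j = inner ℂ (kk (a j)) (kk (b i)) := fun i j => hrep _ _
  have hKm : ∀ i j, (K.map (starRingEnd ℂ)) i j = inner ℂ (kk (b i)) (kk (a j)) := by
    intro i j
    rw [Matrix.map_apply, hKe]
    exact inner_conj_symm _ _
  have hZA : (⨅ j : Fin n, LinearMap.ker ((LinearMap.proj (a j)).comp ev)) = Uᗮ := by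
    ext f
    simp only [Submodule.mem_iInf, LinearMap.mem_ker, LinearMap.coe_comp, Function.comp_apply,
      LinearMap.proj_apply, hrep]
    exact (mem_orthogonal_span_range_iff _ f).symm
  have hZB : (⨅ i : Fin n, LinearMap.ker ((LinearMap.proj (b i)).comp ev)) = Vᗮ := by
    ext f
    simp only [Submodule.mem_iInf, LinearMap.mem_ker, LinearMap.coe_comp, Function.comp_apply,
      LinearMap.proj_apply, hrep]
    exact (mem_orthogonal_span_range_iff _ f).symm
  haveI : FiniteDimensional ℂ U := FiniteDimensional.span_of_finite ℂ (Set.finite_range _)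
  haveI : FiniteDimensional ℂ V := FiniteDimensional.span_of_finite ℂ (Set.finite_range _)
  haveI : CompleteSpace U := FiniteDimensional.complete ℂ U
  haveI : CompleteSpace V := FiniteDimensional.complete ℂ V
  have key1 : K.det ≠ 0 ↔ Uᗮ ⊓ V = ⊥ := by
    rw [ne_eq, ← Matrix.exists_vecMul_eq_zero_iff, not_exists]
    constructor
    · intro h
      rw [Submodule.eq_bot_iff]
      rintro x ⟨hxU, hxV⟩
      obtain ⟨c, rfl⟩ := (Submodule.mem_span_range_iff_exists_fun ℂ).1 hxV
      have hc : Matrix.vecMul c K = 0 := by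
        funext j
        have h0 := (mem_orthogonal_span_range_iff _ _).1 hxU j
        rw [inner_sum] at h0
        simp only [inner_smul_right, ← hKe] at h0
        simpa [Matrix.vecMul, dotProduct] using h0
      have hc0 : c = 0 := by
        by_contra hc0
        exact h c ⟨hc0, hc⟩
      simp [hc0]
    · rintro h c ⟨hc0, hc⟩
      have hx : (∑ i, c i • kk (b i)) ∈ Uᗮ ⊓ V := by
        constructor
        · refine (mem_orthogonal_span_range_iff (fun j => kk (a j)) _).2 fun j => ?_
          have h0 := congrFun hc j
          rw [inner_sum]
          simp only [inner_smul_right, ← hKe]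
          simpa [Matrix.vecMul, dotProduct] using h0
        · exact Submodule.sum_mem _ fun i _ =>
            Submodule.smul_mem _ _ (Submodule.subset_span ⟨i, rfl⟩)
      rw [h, Submodule.mem_bot] at hx
      exact hc0 (funext (Fintype.linearIndependent_iff.1 hlib c hx))
  have key2 : K.det ≠ 0 ↔ U ⊓ Vᗮ = ⊥ := by
    have hmd : (K.map (starRingEnd ℂ)).det = (starRingEnd ℂ) K.det :=
      ((starRingEnd ℂ).map_det K).symm
    have hdet : K.det ≠ 0 ↔ (K.map (starRingEnd ℂ)).det ≠ 0 := by
      rw [hmd]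
      exact (not_congr (map_eq_zero_iff (starRingEnd ℂ) (RingHom.injective _))).symm
    rw [hdet, ne_eq, ← Matrix.exists_mulVec_eq_zero_iff, not_exists]
    constructor
    · intro h
      rw [Submodule.eq_bot_iff]
      rintro x ⟨hxU, hxV⟩
      obtain ⟨d, rfl⟩ := (Submodule.mem_span_range_iff_exists_fun ℂ).1 hxU
      have hd : Matrix.mulVec (K.map (starRingEnd ℂ)) d = 0 := by
        funext i
        have h0 := (mem_orthogonal_span_range_iff _ _).1 hxV i
        rw [inner_sum] at h0
        simp only [inner_smul_right, ← hKm] at h0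
        simpa [Matrix.mulVec, dotProduct, mul_comm] using h0
      have hd0 : d = 0 := by
        by_contra hd0
        exact h d ⟨hd0, hd⟩
      simp [hd0]
    · rintro h d ⟨hd0, hd⟩
      have hx : (∑ j, d j • kk (a j)) ∈ U ⊓ Vᗮ := by
        constructor
        · exact Submodule.sum_mem _ fun j _ =>
            Submodule.smul_mem _ _ (Submodule.subset_span ⟨j, rfl⟩)
        · refine (mem_orthogonal_span_range_iff (fun i => kk (b i)) _).2 fun i => ?_
          have h0 := congrFun hd i
          rw [inner_sum]
          simp only [inner_smul_right, ← hKm]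
          simpa [Matrix.mulVec, dotProduct, mul_comm] using h0
      rw [h, Submodule.mem_bot] at hx
      exact hd0 (funext (Fintype.linearIndependent_iff.1 hlia d hx))
  rw [hZA, hZB, Submodule.orthogonal_orthogonal, Submodule.orthogonal_orthogonal]
  constructor
  · intro hdet
    exact ⟨key1.1 hdet, key2.1 hdet⟩
  · rintro ⟨h1, _⟩
    exact key1.2 h1
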